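/- arXiv:2008.05519 — 2 statements merged into one kernel-verified Lean document; each statement's English description precedes it below -/
import Mathlib

section
/- Let n, k, N, d be positive integers and L, M, M' > 0. Let φ : ℝⁿ × (ℝ^d)^N → ℝ^k satisfy max_{1≤i≤k} |φ^i(x,α)|² ≤ M for all (x,α) (where φ^i is the i-th component of φ) and |φ(x,α₁) − φ(x,α₂)|² ≤ L|α₁−α₂|² for all x, α₁, α₂; let f = (f¹,…,f^N) : ℝⁿ × (ℝ^d)^N → ℝ^N satisfy |f(x,α₁) − f(x,α₂)|² ≤ L|α₁−α₂|². For tuples α = (α¹,…,α^N), β = (β¹,…,β^N) ∈ (ℝ^d)^N and i ∈ {1,…,N}, write (βⁱ; α^{−i}) for the tuple obtained from α by replacing its i-th block with βⁱ. Then there exists a constant C > 0, depending only on L, M, M' and k, such that for all x ∈ ℝⁿ, all α, β, γ ∈ (ℝ^d)^N, and all matrices w, z ∈ ℝ^{k×N} with ‖z‖_S² ≤ M', one has Σ_{i=1}^N | φ(x,(βⁱ;α^{−i}))·wⁱ + fⁱ(x,(βⁱ;α^{−i})) − φ(x,γ)·zⁱ − fⁱ(x,γ) |² ≤ C( ‖w−z‖_F²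 + |α−γ|² + |β−γ|² ). -/
open scoped BigOperators

/-- The Frobenius norm of a real `k × N` matrix. -/
noncomputable def frobNorm {k N : ℕ} (z : Matrix (Fin k) (Fin N) ℝ) : ℝ :=
  Real.sqrt (∑ j : Fin k, ∑ i : Fin N, (z j i) ^ 2)

/-- The spectral (ℓ²-operator) norm of a real `k × N` matrix. -/
noncomputable def specNorm {k N : ℕ} (z : Matrix (Fin k) (Fin N) ℝ) : ℝ :=
  ‖LinearMap.toContinuousLinearMap (Matrix.toEuclideanLin (𝕜 := ℝ) z)‖

lemma mulVec_sq_le {k N : ℕ} (z : Matrix (Fin k) (Fin N) ℝ) (v : Fin N → ℝ) :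
    ∑ j : Fin k, (∑ i : Fin N, z j i * v i) ^ 2 ≤ specNorm z ^ 2 * ∑ i : Fin N, (v i) ^ 2 := by
  have h := (LinearMap.toContinuousLinearMap (Matrix.toEuclideanLin (𝕜 := ℝ) z)).le_opNorm
    ((WithLp.equiv 2 _).symm v)
  have hL : ‖(LinearMap.toContinuousLinearMap (Matrix.toEuclideanLin (𝕜 := ℝ) z))
      ((WithLp.equiv 2 _).symm v)‖ = Real.sqrt (∑ j : Fin k, (∑ i : Fin N, z j i * v i) ^ 2) := by
    rw [LinearMap.coe_toContinuousLinearMap', Matrix.toEuclideanLin_apply, EuclideanSpace.norm_eq]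
    congr 1
    refine Finset.sum_congr rfl fun j _ => ?_
    simp [Matrix.mulVec, dotProduct, sq_abs]
  have hR : ‖((WithLp.equiv 2 (Fin N → ℝ)).symm v)‖ = Real.sqrt (∑ i : Fin N, (v i) ^ 2) := by
    rw [EuclideanSpace.norm_eq]
    simp [sq_abs]
  rw [hL, hR] at h
  have h2 : Real.sqrt (∑ j : Fin k, (∑ i : Fin N, z j i * v i) ^ 2) ^ 2
      ≤ (specNorm z * Real.sqrt (∑ i : Fin N, (v i) ^ 2)) ^ 2 :=
    pow_le_pow_left₀ (Real.sqrt_nonneg _) h 2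
  rw [Real.sq_sqrt (by positivity), mul_pow, Real.sq_sqrt (by positivity)] at h2
  exact h2

lemma col_sq_le {k N : ℕ} (z : Matrix (Fin k) (Fin N) ℝ) (i : Fin N) :
    ∑ j : Fin k, (z j i) ^ 2 ≤ specNorm z ^ 2 := by
  have h := mulVec_sq_le z (fun l => if l = i then 1 else 0)
  simp [Finset.mul_sum, Finset.sum_ite_eq'] at h
  simpa using h

lemma transpose_sq_le {k N : ℕ} (z : Matrix (Fin k) (Fin N) ℝ) (v : Fin k → ℝ) :
    ∑ i : Fin N, (∑ j : Fin k, v j * z j i) ^ 2 ≤ specNorm z ^ 2 * ∑ j : Fin k, (v j) ^ 2 := by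
  set u : Fin N → ℝ := fun i => ∑ j : Fin k, v j * z j i with hu
  set S : ℝ := ∑ i : Fin N, (u i) ^ 2 with hS
  have hS0 : 0 ≤ S := by positivity
  have key : S = ∑ j : Fin k, v j * (∑ i : Fin N, z j i * u i) := by
    calc S = ∑ i : Fin N, ∑ j : Fin k, v j * z j i * u i := by
            refine Finset.sum_congr rfl fun i _ => ?_
            rw [sq, hu, Finset.sum_mul]
      _ = ∑ j : Fin k, ∑ i : Fin N, v j * (z j i * u i) := by
            rw [Finset.sum_comm]
            exact Finset.sum_congr rfl fun _ _ => Finset.sum_congr rfl fun _ _ => by ring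
      _ = _ := by simp [Finset.mul_sum]
  have cs : S ^ 2 ≤ (∑ j : Fin k, (v j) ^ 2) * ∑ j : Fin k, (∑ i : Fin N, z j i * u i) ^ 2 := by
    rw [key]; exact Finset.sum_mul_sq_le_sq_mul_sq _ _ _
  have h2 := mulVec_sq_le z u
  rcases eq_or_lt_of_le hS0 with h | h
  · rw [← h]; positivity
  · have hB : 0 ≤ ∑ j : Fin k, (v j) ^ 2 := by positivity
    nlinarith [sq_nonneg (specNorm z)]

lemma eucl_norm_sq {m : ℕ} (u v : EuclideanSpace ℝ (Fin m)) :
    ‖u - v‖ ^ 2 = ∑ j : Fin m, (u j - v j) ^ 2 := by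
  rw [PiLp.norm_sq_eq_of_L2]
  refine Finset.sum_congr rfl fun j _ => ?_
  simp [sq_abs]

lemma tuple_norm_sq {N d : ℕ} (u v : PiLp 2 fun _ : Fin N => EuclideanSpace ℝ (Fin d)) :
    ‖u - v‖ ^ 2 = ∑ i : Fin N, ‖u i - v i‖ ^ 2 := by
  rw [PiLp.norm_sq_eq_of_L2]
  refine Finset.sum_congr rfl fun i _ => ?_
  simp

lemma update_norm_sq {N d : ℕ} (α β u : PiLp 2 fun _ : Fin N => EuclideanSpace ℝ (Fin d))
    (i : Fin N) (hu : u = Function.update α i (β i)) :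
    ‖u - α‖ ^ 2 = ‖β i - α i‖ ^ 2 := by
  rw [tuple_norm_sq]
  rw [Finset.sum_eq_single i]
  · simp [hu]
  · intro l _ hl
    simp [hu, Function.update_apply, hl]
  · simp

lemma five_sq (a b c d e : ℝ) :
    (a + b + c + d + e) ^ 2 ≤ 5 * (a ^ 2 + b ^ 2 + c ^ 2 + d ^ 2 + e ^ 2) := by
  nlinarith [sq_nonneg (a - b), sq_nonneg (a - c), sq_nonneg (a - d), sq_nonneg (a - e),
    sq_nonneg (b - c), sq_nonneg (b - d), sq_nonneg (b - e), sq_nonneg (c - d),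
    sq_nonneg (c - e), sq_nonneg (d - e)]

set_option maxHeartbeats 1000000 in
/-- The key pointwise estimate on the vector of Hamiltonian differences
arising in the fictitious-play iteration: with `Hⁱ(x,α,pⁱ) = φ(x,α)·pⁱ + fⁱ(x,α)`, there is a
constant `C` depending only on `L, M, M', k` such that
`∑ᵢ |Hⁱ(x,(βⁱ;α⁻ⁱ),wⁱ) − Hⁱ(x,γ,zⁱ)|² ≤ C(‖w−z‖_F² + |α−γ|² + |β−γ|²)`
whenever `‖z‖_S² ≤ M'`. Tuples in `(ℝ^d)^N` are modeled as `PiLp 2` so that the norm is the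
Euclidean norm of the full tuple, and `(βⁱ;α⁻ⁱ) = Function.update α i (β i)`. -/
theorem stmt2 (k : ℕ) (hk : 0 < k) (L M M' : ℝ) (hL : 0 < L) (hM : 0 < M) (hM' : 0 < M') :
    ∃ C > 0, ∀ (n N d : ℕ), 0 < n → 0 < N → 0 < d →
      ∀ (φ : EuclideanSpace ℝ (Fin n) → (PiLp 2 fun _ : Fin N => EuclideanSpace ℝ (Fin d)) →
            EuclideanSpace ℝ (Fin k))
        (f : EuclideanSpace ℝ (Fin n) → (PiLp 2 fun _ : Fin N => EuclideanSpace ℝ (Fin d)) →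
            EuclideanSpace ℝ (Fin N)),
      (∀ x α (j : Fin k), (φ x α j) ^ 2 ≤ M) →
      (∀ x α₁ α₂, ‖φ x α₁ - φ x α₂‖ ^ 2 ≤ L * ‖α₁ - α₂‖ ^ 2) →
      (∀ x α₁ α₂, ‖f x α₁ - f x α₂‖ ^ 2 ≤ L * ‖α₁ - α₂‖ ^ 2) →
      ∀ (x : EuclideanSpace ℝ (Fin n))
        (α β γ : PiLp 2 fun _ : Fin N => EuclideanSpace ℝ (Fin d))
        (w z : Matrix (Fin k) (Fin N) ℝ),
      specNorm z ^ 2 ≤ M' →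
      ∑ i : Fin N,
        ((∑ j : Fin k, φ x (WithLp.toLp 2 (Function.update α i (β i))) j * w j i)
            + f x (WithLp.toLp 2 (Function.update α i (β i))) i
          - (∑ j : Fin k, φ x γ j * z j i) - f x γ i) ^ 2
        ≤ C * (frobNorm (w - z) ^ 2 + ‖α - γ‖ ^ 2 + ‖β - γ‖ ^ 2) := by
  have hk1 : (1 : ℝ) ≤ (k : ℝ) := by exact_mod_cast hk
  refine ⟨5 * k * M + 15 * L * (M' + 1), by nlinarith, ?_⟩
  intro n N d hn hN hd φ f hMb hφ hf x α β γ w z hz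
  set A : Fin N → (PiLp 2 fun _ : Fin N => EuclideanSpace ℝ (Fin d)) :=
    fun i => WithLp.toLp 2 (Function.update α i (β i)) with hA
  -- the five pieces
  set a : Fin N → ℝ := fun i => ∑ j : Fin k, φ x (A i) j * (w j i - z j i) with ha
  set b : Fin N → ℝ := fun i => ∑ j : Fin k, (φ x (A i) j - φ x α j) * z j i with hb
  set c : Fin N → ℝ := fun i => ∑ j : Fin k, (φ x α j - φ x γ j) * z j i with hc
  set dd : Fin N → ℝ := fun i => f x (A i) i - f x α i with hdd
  set e : Fin N → ℝ := fun i => f x α i - f x γ i with he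
  have hsplit : ∀ i : Fin N,
      ((∑ j : Fin k, φ x (A i) j * w j i) + f x (A i) i
        - (∑ j : Fin k, φ x γ j * z j i) - f x γ i)
      = a i + b i + c i + dd i + e i := by
    intro i
    have h1 : a i + b i + c i
        = (∑ j : Fin k, φ x (A i) j * w j i) - ∑ j : Fin k, φ x γ j * z j i := by
      rw [ha, hb, hc]
      simp only [← Finset.sum_add_distrib, ← Finset.sum_sub_distrib]
      exact Finset.sum_congr rfl fun j _ => by ring
    have h2 : dd i = f x (A i) i - f x α i := rfl
    have h3 : e i = f x α i - f x γ i := rfl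
    linarith [h1, h2, h3]
  -- pointwise bound by 5 times sum of squares
  have step1 : ∑ i : Fin N,
      ((∑ j : Fin k, φ x (A i) j * w j i) + f x (A i) i
        - (∑ j : Fin k, φ x γ j * z j i) - f x γ i) ^ 2
      ≤ 5 * ((∑ i : Fin N, (a i) ^ 2) + (∑ i : Fin N, (b i) ^ 2) + (∑ i : Fin N, (c i) ^ 2)
          + (∑ i : Fin N, (dd i) ^ 2) + (∑ i : Fin N, (e i) ^ 2)) := by
    calc ∑ i : Fin N,
        ((∑ j : Fin k, φ x (A i) j * w j i) + f x (A i) i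
          - (∑ j : Fin k, φ x γ j * z j i) - f x γ i) ^ 2
        ≤ ∑ i : Fin N, 5 * ((a i) ^ 2 + (b i) ^ 2 + (c i) ^ 2 + (dd i) ^ 2 + (e i) ^ 2) := by
          refine Finset.sum_le_sum fun i _ => ?_
          rw [hsplit i]; exact five_sq _ _ _ _ _
      _ = _ := by rw [← Finset.mul_sum]; simp only [Finset.sum_add_distrib]
  -- bound Sa
  have hfrob : frobNorm (w - z) ^ 2 = ∑ i : Fin N, ∑ j : Fin k, (w j i - z j i) ^ 2 := by
    rw [frobNorm, Real.sq_sqrt (by positivity), Finset.sum_comm]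
    exact Finset.sum_congr rfl fun i _ => Finset.sum_congr rfl fun j _ => by
      simp [Matrix.sub_apply]
  have hSa : ∑ i : Fin N, (a i) ^ 2 ≤ (k : ℝ) * M * frobNorm (w - z) ^ 2 := by
    rw [hfrob, Finset.mul_sum]
    refine Finset.sum_le_sum fun i _ => ?_
    calc (a i) ^ 2 ≤ (∑ j : Fin k, (φ x (A i) j) ^ 2) * ∑ j : Fin k, (w j i - z j i) ^ 2 := by
          rw [ha]; exact Finset.sum_mul_sq_le_sq_mul_sq _ _ _
      _ ≤ ((k : ℝ) * M) * ∑ j : Fin k, (w j i - z j i) ^ 2 := by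
          refine mul_le_mul_of_nonneg_right ?_ (by positivity)
          calc ∑ j : Fin k, (φ x (A i) j) ^ 2 ≤ ∑ _j : Fin k, M :=
                Finset.sum_le_sum fun j _ => hMb x (A i) j
            _ = (k : ℝ) * M := by simp [mul_comm]
  -- norms of update differences
  have hupd : ∀ i : Fin N, ‖A i - α‖ ^ 2 = ‖β i - α i‖ ^ 2 :=
    fun i => update_norm_sq α β (A i) i rfl
  -- bound Sb
  have hSb : ∑ i : Fin N, (b i) ^ 2 ≤ L * M' * ‖β - α‖ ^ 2 := by
    have h1 : ∀ i : Fin N, (b i) ^ 2 ≤ L * M' * ‖β i - α i‖ ^ 2 := by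
      intro i
      calc (b i) ^ 2 ≤ (∑ j : Fin k, (φ x (A i) j - φ x α j) ^ 2) * ∑ j : Fin k, (z j i) ^ 2 := by
            rw [hb]; exact Finset.sum_mul_sq_le_sq_mul_sq _ _ _
        _ ≤ (L * ‖β i - α i‖ ^ 2) * M' := by
            refine mul_le_mul ?_ (le_trans (col_sq_le z i) hz) (by positivity) (by positivity)
            rw [← eucl_norm_sq]
            calc ‖φ x (A i) - φ x α‖ ^ 2 ≤ L * ‖A i - α‖ ^ 2 := hφ x (A i) α
              _ = L * ‖β i - α i‖ ^ 2 := by rw [hupd i]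
        _ = L * M' * ‖β i - α i‖ ^ 2 := by ring
    calc ∑ i : Fin N, (b i) ^ 2 ≤ ∑ i : Fin N, L * M' * ‖β i - α i‖ ^ 2 :=
          Finset.sum_le_sum fun i _ => h1 i
      _ = L * M' * ‖β - α‖ ^ 2 := by rw [tuple_norm_sq, Finset.mul_sum]
  -- bound Sc
  have hSc : ∑ i : Fin N, (c i) ^ 2 ≤ M' * (L * ‖α - γ‖ ^ 2) := by
    calc ∑ i : Fin N, (c i) ^ 2
        ≤ specNorm z ^ 2 * ∑ j : Fin k, (φ x α j - φ x γ j) ^ 2 :=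
          transpose_sq_le z (fun j => φ x α j - φ x γ j)
      _ ≤ M' * (L * ‖α - γ‖ ^ 2) := by
          refine mul_le_mul hz ?_ (by positivity) (le_of_lt hM')
          rw [← eucl_norm_sq]; exact hφ x α γ
  -- bound Sd
  have hSd : ∑ i : Fin N, (dd i) ^ 2 ≤ L * ‖β - α‖ ^ 2 := by
    have h1 : ∀ i : Fin N, (dd i) ^ 2 ≤ L * ‖β i - α i‖ ^ 2 := by
      intro i
      calc (dd i) ^ 2 = (f x (A i) i - f x α i) ^ 2 := rfl
        _ ≤ ∑ l : Fin N, (f x (A i) l - f x α l) ^ 2 :=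
            Finset.single_le_sum (f := fun l => (f x (A i) l - f x α l) ^ 2)
              (fun l _ => sq_nonneg _) (Finset.mem_univ i)
        _ = ‖f x (A i) - f x α‖ ^ 2 := (eucl_norm_sq _ _).symm
        _ ≤ L * ‖A i - α‖ ^ 2 := hf x (A i) α
        _ = L * ‖β i - α i‖ ^ 2 := by rw [hupd i]
    calc ∑ i : Fin N, (dd i) ^ 2 ≤ ∑ i : Fin N, L * ‖β i - α i‖ ^ 2 :=
          Finset.sum_le_sum fun i _ => h1 i
      _ = L * ‖β - α‖ ^ 2 := by rw [tuple_norm_sq, Finset.mul_sum]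
  -- bound Se
  have hSe : ∑ i : Fin N, (e i) ^ 2 ≤ L * ‖α - γ‖ ^ 2 := by
    calc ∑ i : Fin N, (e i) ^ 2 = ‖f x α - f x γ‖ ^ 2 := (eucl_norm_sq _ _).symm
      _ ≤ L * ‖α - γ‖ ^ 2 := hf x α γ
  -- ‖β - α‖² ≤ 2‖β - γ‖² + 2‖α - γ‖²
  have htri : ‖β - α‖ ^ 2 ≤ 2 * ‖β - γ‖ ^ 2 + 2 * ‖α - γ‖ ^ 2 := by
    have h1 : ‖β - α‖ ≤ ‖β - γ‖ + ‖γ - α‖ := norm_sub_le_norm_sub_add_norm_sub β γ α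
    rw [norm_sub_rev γ α] at h1
    nlinarith [mul_self_le_mul_self (norm_nonneg (β - α)) h1,
      sq_nonneg (‖β - γ‖ - ‖α - γ‖), norm_nonneg (β - γ), norm_nonneg (α - γ)]
  -- final combination
  have hF : 0 ≤ frobNorm (w - z) ^ 2 := sq_nonneg _
  have hAg : 0 ≤ ‖α - γ‖ ^ 2 := sq_nonneg _
  have hBg : 0 ≤ ‖β - γ‖ ^ 2 := sq_nonneg _
  refine le_trans step1 ?_
  have hkc : (0 : ℝ) ≤ (k : ℝ) := Nat.cast_nonneg k
  nlinarith [hSa, hSb, hSc, hSd, hSe, htri,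
    mul_le_mul_of_nonneg_left htri (le_of_lt (mul_pos hL hM')),
    mul_le_mul_of_nonneg_left htri (le_of_lt hL),
    mul_nonneg (mul_nonneg hL.le hM'.le) hF, mul_nonneg hL.le hF,
    mul_nonneg (mul_nonneg hkc hM.le) hAg, mul_nonneg (mul_nonneg hkc hM.le) hBg,
    mul_nonneg (mul_nonneg hL.le hM'.le) hBg, mul_nonneg hL.le hBg]
end

section
/- Let n and d be positive integers, L' > 0, and let μ be a measure on ℝ × ℝⁿ. Consider the real Hilbert space L²(μ; ℝ^d) of square-integrable ℝ^d-valued functions on ℝ × ℝⁿ, identified up to μ-almost-everywhere equality. Let N denote the set of those F ∈ L²(μ; ℝ^d) that admit a representative g : ℝ × ℝⁿ → ℝ^d satisfying, for all (t₁,x₁), (t₂,x₂) ∈ ℝ × ℝⁿ, |g(t₁,x₁) − g(t₂,x₂)|² ≤ L'(|t₁−t₂| + |x₁−x₂|²), and, for all (t,x) ∈ ℝ × ℝⁿ, |g(t,x)|² ≤ L'(1 + |x|²). Then N is a convex and closed subset of L²(μ; ℝ^d). -/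
open MeasureTheory

section Aux

variable {H : Type*} [NormedAddCommGroup H] [NormedSpace ℝ H]

/-- Convex combination bound for squared norms. -/
lemma convex_sq_norm_bound {a b M : ℝ} (ha : 0 ≤ a) (hb : 0 ≤ b) (hab : a + b = 1)
    (u v : H) (hu : ‖u‖ ^ 2 ≤ M) (hv : ‖v‖ ^ 2 ≤ M) :
    ‖a • u + b • v‖ ^ 2 ≤ M := by
  have key : ‖a • u + b • v‖ ≤ a * ‖u‖ + b * ‖v‖ := by
    refine (norm_add_le _ _).trans ?_
    rw [norm_smul, norm_smul, Real.norm_eq_abs, abs_of_nonneg ha,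
      Real.norm_eq_abs, abs_of_nonneg hb]
  have h1 : ‖a • u + b • v‖ ^ 2 ≤ (a * ‖u‖ + b * ‖v‖) ^ 2 :=
    pow_le_pow_left₀ (norm_nonneg _) key 2
  have h2 : (a * ‖u‖ + b * ‖v‖) ^ 2 ≤ a * ‖u‖ ^ 2 + b * ‖v‖ ^ 2 := by
    nlinarith [sq_nonneg (‖u‖ - ‖v‖), mul_nonneg ha hb]
  nlinarith [mul_le_mul_of_nonneg_left hu ha, mul_le_mul_of_nonneg_left hv hb]

end Aux

/-- The class `𝒩` of policy functions in `L²(μ; ℝ^d)` admitting a representative that is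
jointly 1/2-Hölder in time and Lipschitz in space (with squared modulus
`L'(|t₁−t₂| + |x₁−x₂|²)`) and satisfies the linear growth bound `|g(t,x)|² ≤ L'(1+|x|²)`. -/
def NclassSet (n d : ℕ) (L' : ℝ) (μ : Measure (ℝ × EuclideanSpace ℝ (Fin n))) :
    Set (Lp (EuclideanSpace ℝ (Fin d)) 2 μ) :=
  {F | ∃ g : ℝ × EuclideanSpace ℝ (Fin n) → EuclideanSpace ℝ (Fin d),
    (∀ᵐ z ∂μ, F z = g z) ∧
    (∀ (t₁ t₂ : ℝ) (x₁ x₂ : EuclideanSpace ℝ (Fin n)),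
      ‖g (t₁, x₁) - g (t₂, x₂)‖ ^ 2 ≤ L' * (|t₁ - t₂| + ‖x₁ - x₂‖ ^ 2)) ∧
    (∀ (t : ℝ) (x : EuclideanSpace ℝ (Fin n)),
      ‖g (t, x)‖ ^ 2 ≤ L' * (1 + ‖x‖ ^ 2))}

set_option synthInstance.maxHeartbeats 1000000 in
set_option maxHeartbeats 1000000 in
/-- The class `𝒩` is a convex and closed subset of the Hilbert space
`L²(μ; ℝ^d)` of square-integrable `ℝ^d`-valued functions on `ℝ × ℝⁿ`. -/
theorem stmt5 (n d : ℕ) (hn : 0 < n) (hd : 0 < d) (L' : ℝ) (hL' : 0 < L')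
    (μ : Measure (ℝ × EuclideanSpace ℝ (Fin n))) :
    Convex ℝ (NclassSet n d L' μ) ∧ IsClosed (NclassSet n d L' μ) := by
  constructor
  · -- Convexity
    rintro F₁ ⟨g₁, hae₁, hlip₁, hgr₁⟩ F₂ ⟨g₂, hae₂, hlip₂, hgr₂⟩ a b ha hb hab
    refine ⟨fun z => a • g₁ z + b • g₂ z, ?_, ?_, ?_⟩
    · filter_upwards [hae₁, hae₂, Lp.coeFn_add (a • F₁) (b • F₂),
        Lp.coeFn_smul a F₁, Lp.coeFn_smul b F₂] with z h1 h2 h3 h4 h5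
      rw [h3]
      simp only [Pi.add_apply]
      rw [h4, h5]
      simp [h1, h2]
    · intro t₁ t₂ x₁ x₂
      have e1 := hlip₁ t₁ t₂ x₁ x₂
      have e2 := hlip₂ t₁ t₂ x₁ x₂
      have : (a • g₁ (t₁, x₁) + b • g₂ (t₁, x₁)) - (a • g₁ (t₂, x₂) + b • g₂ (t₂, x₂))
          = a • (g₁ (t₁, x₁) - g₁ (t₂, x₂)) + b • (g₂ (t₁, x₁) - g₂ (t₂, x₂)) := by
        module
      show ‖(a • g₁ (t₁, x₁) + b • g₂ (t₁, x₁)) - (a • g₁ (t₂, x₂) + b • g₂ (t₂, x₂))‖ ^ 2 ≤ _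
      rw [this]
      exact convex_sq_norm_bound ha hb hab _ _ e1 e2
    · intro t x
      exact convex_sq_norm_bound ha hb hab _ _ (hgr₁ t x) (hgr₂ t x)
  · -- Closedness
    refine IsSeqClosed.isClosed ?_
    intro u F hu hF
    choose g hg_ae hg_lip hg_gr using hu
    -- a.e. convergent subsequence from Lp convergence
    obtain ⟨ns, hns_mono, hns_ae⟩ :=
      (tendstoInMeasure_of_tendsto_Lp hF).exists_seq_tendsto_ae
    -- dense sequence in the domain
    obtain ⟨e, he⟩ := TopologicalSpace.exists_dense_seq (ℝ × EuclideanSpace ℝ (Fin n))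
    set R : ℕ → ℝ := fun m => Real.sqrt (L' * (1 + ‖(e m).2‖ ^ 2)) with hR
    have hball : ∀ k m, g k (e m) ∈ Metric.closedBall (0 : EuclideanSpace ℝ (Fin d)) (R m) := by
      intro k m
      rw [Metric.mem_closedBall, dist_zero_right]
      refine Real.le_sqrt_of_sq_le ?_
      have := hg_gr k (e m).1 (e m).2
      simpa using this
    -- diagonal extraction on the countable product of closed balls
    haveI : ∀ m : ℕ, CompactSpace (Metric.closedBall (0 : EuclideanSpace ℝ (Fin d)) (R m)) := fun m =>
      isCompact_iff_compactSpace.mp (isCompact_closedBall _ _)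
    obtain ⟨A, φ, hφ_mono, hφ_tendsto⟩ :=
      CompactSpace.tendsto_subseq
        (X := ∀ m : ℕ, Metric.closedBall (0 : EuclideanSpace ℝ (Fin d)) (R m))
        (fun k m => ⟨g (ns k) (e m), hball (ns k) m⟩)
    -- pointwise convergence on the dense sequence
    have hpt : ∀ m : ℕ, Filter.Tendsto (fun i => g (ns (φ i)) (e m)) Filter.atTop
        (nhds (A m : EuclideanSpace ℝ (Fin d))) := by
      intro m
      have hcont : Continuous fun f : ∀ m : ℕ, Metric.closedBall (0 : EuclideanSpace ℝ (Fin d)) (R m) => (f m : EuclideanSpace ℝ (Fin d)) :=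
        continuous_subtype_val.comp (continuous_apply m)
      exact (hcont.tendsto A).comp hφ_tendsto
    set h : ℕ → ℝ × EuclideanSpace ℝ (Fin n) → EuclideanSpace ℝ (Fin d) := fun i => g (ns (φ i)) with hh
    -- uniform modulus of continuity
    have hmod : ∀ (k : ℕ) (z w : ℝ × EuclideanSpace ℝ (Fin n)),
        dist (g k z) (g k w) ≤ Real.sqrt (L' * (dist z w + dist z w ^ 2)) := by
      intro k z w
      rw [dist_eq_norm]
      refine Real.le_sqrt_of_sq_le ?_
      have := hg_lip k z.1 w.1 z.2 w.2
      simp only [Prod.mk.eta] at this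
      refine this.trans ?_
      have h1 : |z.1 - w.1| ≤ dist z w := by
        rw [← Real.dist_eq]
        exact le_max_left _ _
      have h2 : ‖z.2 - w.2‖ ≤ dist z w := by
        rw [← dist_eq_norm]
        exact le_max_right _ _
      have h3 : ‖z.2 - w.2‖ ^ 2 ≤ dist z w ^ 2 :=
        pow_le_pow_left₀ (norm_nonneg _) h2 2
      nlinarith
    -- Cauchyness at every point, via density and equicontinuity
    have hcauchy : ∀ z, CauchySeq (fun i => h i z) := by
      intro z
      rw [Metric.cauchySeq_iff]
      intro ε hε
      set δ : ℝ := min 1 (ε ^ 2 / (19 * L')) with hδdef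
      have hδpos : 0 < δ :=
        lt_min one_pos (div_pos (pow_pos hε 2) (by linarith))
      obtain ⟨m, hm⟩ : ∃ m, dist z (e m) < δ := by
        obtain ⟨m, hm⟩ := he.exists_dist_lt z hδpos
        exact ⟨m, hm⟩
      have hmodm : ∀ i, dist (h i z) (h i (e m)) < ε / 3 := by
        intro i
        refine lt_of_le_of_lt (hmod (ns (φ i)) z (e m)) ?_
        rw [Real.sqrt_lt' (by linarith)]
        have hd1 : dist z (e m) ≤ δ := hm.le
        have hd2 : dist z (e m) ^ 2 ≤ δ := by
          have : dist z (e m) ^ 2 ≤ δ ^ 2 := pow_le_pow_left₀ dist_nonneg hd1 2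
          refine this.trans ?_
          nlinarith [min_le_left 1 (ε ^ 2 / (19 * L')), hδpos]
        have hδle : δ ≤ ε ^ 2 / (19 * L') := min_le_right _ _
        have : L' * (dist z (e m) + dist z (e m) ^ 2) ≤ L' * (2 * δ) := by
          nlinarith
        refine this.trans_lt ?_
        have : L' * (2 * δ) ≤ L' * (2 * (ε ^ 2 / (19 * L'))) := by
          nlinarith
        refine this.trans_lt ?_
        have h19 : L' * (2 * (ε ^ 2 / (19 * L'))) = 2 * ε ^ 2 / 19 := by
          field_simp
        rw [h19]
        nlinarith [pow_pos hε 2]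
      obtain ⟨N, hN⟩ := Metric.cauchySeq_iff.mp (hpt m).cauchySeq (ε / 3) (by linarith)
      refine ⟨N, fun i hi j hj => ?_⟩
      calc dist (h i z) (h j z)
          ≤ dist (h i z) (h i (e m)) + dist (h i (e m)) (h j (e m))
            + dist (h j (e m)) (h j z) := dist_triangle4 _ _ _ _
        _ < ε / 3 + ε / 3 + ε / 3 := by
            have := hN i hi j hj
            have h2 := hmodm i
            have h3 := hmodm j
            rw [dist_comm] at h3
            exact add_lt_add (add_lt_add h2 this) h3
        _ = ε := by ring
    have hlim : ∀ z, ∃ c : EuclideanSpace ℝ (Fin d), Filter.Tendsto (fun i => h i z) Filter.atTop (nhds c) :=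
      fun z => cauchySeq_tendsto_of_complete (hcauchy z)
    choose G hG using hlim
    refine ⟨G, ?_, ?_, ?_⟩
    · -- a.e. equality with F
      have hae_all : ∀ᵐ z ∂μ, ∀ k, u k z = g k z := ae_all_iff.mpr hg_ae
      filter_upwards [hns_ae, hae_all] with z h1 h2
      have h1' : Filter.Tendsto (fun i => h i z) Filter.atTop (nhds (F z)) := by
        have hcomp : Filter.Tendsto (fun i => u (ns (φ i)) z) Filter.atTop (nhds (F z)) :=
          h1.comp (hφ_mono.tendsto_atTop)
        simpa only [hh, h2] using hcomp
      exact tendsto_nhds_unique h1' (hG z)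
    · -- Hölder/Lipschitz bound for the limit
      intro t₁ t₂ x₁ x₂
      have htend : Filter.Tendsto (fun i => ‖h i (t₁, x₁) - h i (t₂, x₂)‖ ^ 2)
          Filter.atTop (nhds (‖G (t₁, x₁) - G (t₂, x₂)‖ ^ 2)) :=
        (((hG (t₁, x₁)).sub (hG (t₂, x₂))).norm).pow 2
      refine le_of_tendsto htend (Filter.Eventually.of_forall fun i => ?_)
      exact hg_lip (ns (φ i)) t₁ t₂ x₁ x₂
    · -- growth bound for the limit
      intro t x
      have htend : Filter.Tendsto (fun i => ‖h i (t, x)‖ ^ 2)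
          Filter.atTop (nhds (‖G (t, x)‖ ^ 2)) := ((hG (t, x)).norm).pow 2
      refine le_of_tendsto htend (Filter.Eventually.of_forall fun i => ?_)
      exact hg_gr (ns (φ i)) t x
end
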